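/- For the trilinear form S₃(x,y,z) = (z₁+z₂)(x₁y₁+x₁y₂+x₂y₁−x₂y₂) + (z₁−z₂)(x₃y₁+x₃y₂+x₄y₁−x₄y₂), one has ∑_{j₂,j₃} (∑_{j₁} |S₃(e_{j₁},e_{j₂},e_{j₃})|)² = 64, hence (∑_{j₂,j₃}(∑_{j₁}|S₃(e_{j₁},e_{j₂},e_{j₃})|)²)^{1/2} / ‖S₃‖ = 2 = (√2)². -/

import Mathlib

set_option maxSynthPendingDepth 3

/-- Standard basis vector of `ℓ∞ⁿ`. -/
noncomputable def stdBasis (n : ℕ) (i : Fin n) : PiLp ⊤ (fun _ : Fin n => ℝ) :=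
  (WithLp.equiv ⊤ (∀ _ : Fin n, ℝ)).symm (Pi.single i 1)

lemma two_abs_le (a b c : ℝ) (ha : |a| ≤ c) (hb : |b| ≤ c) : |a + b| + |a - b| ≤ 2 * c := by
  rw [abs_le] at ha hb
  rcases abs_cases (a + b) with ⟨h1, _⟩ | ⟨h1, _⟩ <;>
    rcases abs_cases (a - b) with ⟨h2, _⟩ | ⟨h2, _⟩ <;> linarith

lemma key (x0 x1 x2 x3 y0 y1 z0 z1 nx ny nz : ℝ)
    (hx0 : |x0| ≤ nx) (hx1 : |x1| ≤ nx) (hx2 : |x2| ≤ nx) (hx3 : |x3| ≤ nx)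
    (hy0 : |y0| ≤ ny) (hy1 : |y1| ≤ ny) (hz0 : |z0| ≤ nz) (hz1 : |z1| ≤ nz) :
    |(z0 + z1) * (x0 * y0 + x0 * y1 + x1 * y0 - x1 * y1)
      + (z0 - z1) * (x2 * y0 + x2 * y1 + x3 * y0 - x3 * y1)| ≤ 4 * nx * ny * nz := by
  have hnx : 0 ≤ nx := le_trans (abs_nonneg _) hx0
  have hy := two_abs_le y0 y1 ny hy0 hy1
  have hz := two_abs_le z0 z1 nz hz0 hz1
  have hA : |x0 * (y0 + y1) + x1 * (y0 - y1)| ≤ nx * (|y0 + y1| + |y0 - y1|) := by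
    calc |x0 * (y0 + y1) + x1 * (y0 - y1)| ≤ |x0| * |y0 + y1| + |x1| * |y0 - y1| := by
          rw [← abs_mul, ← abs_mul]; exact abs_add_le _ _
    _ ≤ nx * (|y0 + y1| + |y0 - y1|) := by
          nlinarith [abs_nonneg (y0 + y1), abs_nonneg (y0 - y1)]
  have hB : |x2 * (y0 + y1) + x3 * (y0 - y1)| ≤ nx * (|y0 + y1| + |y0 - y1|) := by
    calc |x2 * (y0 + y1) + x3 * (y0 - y1)| ≤ |x2| * |y0 + y1| + |x3| * |y0 - y1| := by
          rw [← abs_mul, ← abs_mul]; exact abs_add_le _ _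
    _ ≤ nx * (|y0 + y1| + |y0 - y1|) := by
          nlinarith [abs_nonneg (y0 + y1), abs_nonneg (y0 - y1)]
  have e1 : x0 * y0 + x0 * y1 + x1 * y0 - x1 * y1 = x0 * (y0 + y1) + x1 * (y0 - y1) := by ring
  have e2 : x2 * y0 + x2 * y1 + x3 * y0 - x3 * y1 = x2 * (y0 + y1) + x3 * (y0 - y1) := by ring
  rw [e1, e2]
  calc |(z0 + z1) * (x0 * (y0 + y1) + x1 * (y0 - y1))
        + (z0 - z1) * (x2 * (y0 + y1) + x3 * (y0 - y1))|
      ≤ |z0 + z1| * |x0 * (y0 + y1) + x1 * (y0 - y1)|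
        + |z0 - z1| * |x2 * (y0 + y1) + x3 * (y0 - y1)| := by
        rw [← abs_mul, ← abs_mul]; exact abs_add_le _ _
    _ ≤ 4 * nx * ny * nz := by
        have h1 : |z0 + z1| * |x0 * (y0 + y1) + x1 * (y0 - y1)|
            ≤ |z0 + z1| * (nx * (|y0 + y1| + |y0 - y1|)) :=
          mul_le_mul_of_nonneg_left hA (abs_nonneg _)
        have h2 : |z0 - z1| * |x2 * (y0 + y1) + x3 * (y0 - y1)|
            ≤ |z0 - z1| * (nx * (|y0 + y1| + |y0 - y1|)) :=
          mul_le_mul_of_nonneg_left hB (abs_nonneg _)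
        have hSy : nx * (|y0 + y1| + |y0 - y1|) ≤ nx * (2 * ny) :=
          mul_le_mul_of_nonneg_left hy hnx
        have hfin : (|z0 + z1| + |z0 - z1|) * (nx * (|y0 + y1| + |y0 - y1|))
            ≤ (2 * nz) * (nx * (2 * ny)) :=
          mul_le_mul hz hSy (mul_nonneg hnx (by positivity))
            (by have hnz : 0 ≤ nz := le_trans (abs_nonneg _) hz0; linarith)
        nlinarith [h1, h2, hfin]

lemma coord_le {n : ℕ} (x : PiLp ⊤ fun _ : Fin n => ℝ) (i : Fin n) : |x i| ≤ ‖x‖ := by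
  rw [PiLp.norm_eq_ciSup]
  exact le_ciSup (f := fun i => ‖x i‖) (Set.Finite.bddAbove (Set.finite_range _)) i

/-- For the trilinear form
`S₃(x,y,z) = (z₁+z₂)(x₁y₁+x₁y₂+x₂y₁−x₂y₂) + (z₁−z₂)(x₃y₁+x₃y₂+x₄y₁−x₄y₂)`,
one has `∑_{j₂,j₃} (∑_{j₁} |S₃(e_{j₁},e_{j₂},e_{j₃})|)² = 64`, hence
`(∑_{j₂,j₃}(∑_{j₁}|S₃(e_{j₁},e_{j₂},e_{j₃})|)²)^{1/2} / ‖S₃‖ = 2`. -/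
theorem stmt6
    (S : (PiLp ⊤ fun _ : Fin 4 => ℝ) →L[ℝ] (PiLp ⊤ fun _ : Fin 2 => ℝ) →L[ℝ]
      (PiLp ⊤ fun _ : Fin 2 => ℝ) →L[ℝ] ℝ)
    (hS : ∀ (x : PiLp ⊤ fun _ : Fin 4 => ℝ) (y z : PiLp ⊤ fun _ : Fin 2 => ℝ),
      S x y z = (z 0 + z 1) * (x 0 * y 0 + x 0 * y 1 + x 1 * y 0 - x 1 * y 1)
        + (z 0 - z 1) * (x 2 * y 0 + x 2 * y 1 + x 3 * y 0 - x 3 * y 1)) :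
    (∑ j₂ : Fin 2, ∑ j₃ : Fin 2,
        (∑ j₁ : Fin 4, |S (stdBasis 4 j₁) (stdBasis 2 j₂) (stdBasis 2 j₃)|) ^ 2) = 64
      ∧ (∑ j₂ : Fin 2, ∑ j₃ : Fin 2,
          (∑ j₁ : Fin 4,
            |S (stdBasis 4 j₁) (stdBasis 2 j₂) (stdBasis 2 j₃)|) ^ 2) ^ ((1 : ℝ) / 2) / ‖S‖
        = 2 := by
  have hsum : (∑ j₂ : Fin 2, ∑ j₃ : Fin 2,
      (∑ j₁ : Fin 4, |S (stdBasis 4 j₁) (stdBasis 2 j₂) (stdBasis 2 j₃)|) ^ 2) = 64 := by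
    simp only [hS, stdBasis, WithLp.equiv_symm_apply, PiLp.toLp_apply, Pi.single_apply,
      Fin.sum_univ_four, Fin.sum_univ_two]
    norm_num [Fin.ext_iff, show ((2:Fin 4):ℕ) = 2 from rfl, show ((3:Fin 4):ℕ) = 3 from rfl]
  refine ⟨hsum, ?_⟩
  have hnorm : ‖S‖ = 4 := by
    apply le_antisymm
    · refine S.opNorm_le_bound (by norm_num) fun x => ?_
      refine ContinuousLinearMap.opNorm_le_bound _ (by positivity) fun y => ?_
      refine ContinuousLinearMap.opNorm_le_bound _ (by positivity) fun z => ?_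
      rw [hS]
      calc |(z 0 + z 1) * (x 0 * y 0 + x 0 * y 1 + x 1 * y 0 - x 1 * y 1)
            + (z 0 - z 1) * (x 2 * y 0 + x 2 * y 1 + x 3 * y 0 - x 3 * y 1)|
          ≤ 4 * ‖x‖ * ‖y‖ * ‖z‖ := key _ _ _ _ _ _ _ _ _ _ _
            (coord_le x 0) (coord_le x 1) (coord_le x 2) (coord_le x 3)
            (coord_le y 0) (coord_le y 1) (coord_le z 0) (coord_le z 1)
        _ = 4 * ‖x‖ * ‖y‖ * ‖z‖ := rfl
    · set x : PiLp ⊤ fun _ : Fin 4 => ℝ := (WithLp.equiv ⊤ _).symm ![1, 1, 1, 1]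
      set y : PiLp ⊤ fun _ : Fin 2 => ℝ := (WithLp.equiv ⊤ _).symm ![1, 0]
      set z : PiLp ⊤ fun _ : Fin 2 => ℝ := (WithLp.equiv ⊤ _).symm ![1, 0]
      have hx : ‖x‖ ≤ 1 := by
        rw [PiLp.norm_eq_ciSup]
        refine ciSup_le fun i => ?_
        fin_cases i <;> simp [x]
      have hy : ‖y‖ ≤ 1 := by
        rw [PiLp.norm_eq_ciSup]
        refine ciSup_le fun i => ?_
        fin_cases i <;> simp [y]
      have hz : ‖z‖ ≤ 1 := by
        rw [PiLp.norm_eq_ciSup]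
        refine ciSup_le fun i => ?_
        fin_cases i <;> simp [z]
      have hval : S x y z = 4 := by
        rw [hS]; simp [x, y, z]; norm_num
      have hb : |S x y z| ≤ ‖S‖ * ‖x‖ * ‖y‖ * ‖z‖ := by
        calc |S x y z| = ‖S x y z‖ := rfl
          _ ≤ ‖S x y‖ * ‖z‖ := (S x y).le_opNorm z
          _ ≤ (‖S x‖ * ‖y‖) * ‖z‖ := by gcongr; exact (S x).le_opNorm y
          _ ≤ ((‖S‖ * ‖x‖) * ‖y‖) * ‖z‖ := by gcongr; exact S.le_opNorm x
          _ = ‖S‖ * ‖x‖ * ‖y‖ * ‖z‖ := by ring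
      rw [hval] at hb
      norm_num at hb
      have hle : ‖S‖ * ‖x‖ * ‖y‖ * ‖z‖ ≤ ‖S‖ * 1 * 1 * 1 := by gcongr
      linarith
  rw [hsum, hnorm]
  rw [show (64 : ℝ) = 8 ^ 2 by norm_num]
  rw [← Real.rpow_natCast (8 : ℝ) 2, ← Real.rpow_mul (by norm_num)]
  norm_num
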